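/- Let μ and ν be finite measures on a measurable space (S, B(S)) such that for some constants a > 0 and b < ∞, a·ν(A) ≤ μ(A) ≤ b·ν(A) for all A ∈ B(S). Let m be the complex measure m(A) = ∫ exp(i u g(y)) Q(y, A) P(dy) where Q is a transition kernel, g a measurable function, and P a probability measure, under the assumption that a·ν(A) ≤ Q(y,A) ≤ b·ν(A) for ν-a.e. parameters. Then for any finite measurable partition (Aᵢ) of S, Σᵢ |m(Aᵢ)| ≤ 1 - (a⁴/(2b))(1 - |∫ exp(i u g(y)) P(dy)|²). -/

import Mathlib

open MeasureTheory

/-- Total-variation bound for the complex measure `m(A) = ∫ exp(iug(y)) Q(y,A) P(dy)`: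
for any finite measurable partition `(Aᵢ)` of `S`,
`Σᵢ |m(Aᵢ)| ≤ 1 - (a⁴/(2b))(1 - |∫ exp(iug) dP|²)`. -/
theorem total_variation_bound
    {S : Type*} [MeasurableSpace S]
    (Q : ProbabilityTheory.Kernel S S) [ProbabilityTheory.IsMarkovKernel Q]
    (P ν : Measure S) [IsProbabilityMeasure P] [IsProbabilityMeasure ν]
    (g : S → ℝ) (hg : Measurable g) (u : ℝ)
    (a b : ℝ) (ha : 0 < a) (ha1 : a ≤ 1) (hb1 : 1 ≤ b)
    (S' : Set S) (hS'meas : MeasurableSet S') (hS' : P S' = 1)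
    (hdom : ∀ y ∈ S', ∀ A : Set S, MeasurableSet A →
      a * (ν A).toReal ≤ (Q y A).toReal ∧ (Q y A).toReal ≤ b * (ν A).toReal)
    (n : ℕ) (A : Fin n → Set S) (hAmeas : ∀ i, MeasurableSet (A i))
    (hAdisj : Pairwise (Function.onFun Disjoint A))
    (hAcov : (⋃ i, A i) = Set.univ) :
    ∑ i, ‖∫ y, Complex.exp (u * g y * Complex.I) *
        ((Q y (A i)).toReal : ℂ) ∂P‖ ≤
      1 - (a ^ 4 / (2 * b)) *
        (1 - ‖∫ y, Complex.exp (u * g y * Complex.I) ∂P‖ ^ 2) := by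
  set c : S → ℂ := fun y => Complex.exp (u * g y * Complex.I) with hc
  have hcabs : ∀ y, ‖c y‖ = 1 := by
    intro y
    rw [hc]
    simp only []
    rw [show (u:ℂ) * (g y) * Complex.I = ((u * g y : ℝ):ℂ) * Complex.I by push_cast; ring]
    exact Complex.norm_exp_ofReal_mul_I _
  have hcmeas : Measurable c := by
    apply Complex.measurable_exp.comp
    fun_prop
  have hcint : Integrable c P := by
    refine Integrable.mono' (integrable_const 1) hcmeas.aestronglyMeasurable ?_
    filter_upwards with y
    rw [hcabs y]
  set φ : ℂ := ∫ y, c y ∂P with hφdef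
  have hφ1 : ‖φ‖ ≤ 1 := by
    rw [hφdef]
    calc ‖∫ y, c y ∂P‖ ≤ ∫ y, ‖c y‖ ∂P := norm_integral_le_integral_norm _
      _ = 1 := by
        simp_rw [hcabs]
        simp
  have hφ0 : 0 ≤ ‖φ‖ := norm_nonneg _
  -- the qi functions
  set q : Fin n → S → ℝ := fun i y => (Q y (A i)).toReal with hq
  have hqmeas : ∀ i, Measurable (q i) := fun i =>
    (Q.measurable_coe (hAmeas i)).ennreal_toReal
  have hqbd : ∀ i y, q i y ≤ 1 := by
    intro i y
    rw [hq]
    exact ENNReal.toReal_le_of_le_ofReal zero_le_one (by simpa using prob_le_one)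
  have hq0 : ∀ i y, 0 ≤ q i y := fun i y => ENNReal.toReal_nonneg
  have hqint : ∀ i, Integrable (q i) P := by
    intro i
    refine Integrable.mono' (integrable_const 1) (hqmeas i).aestronglyMeasurable ?_
    filter_upwards with y
    rw [Real.norm_eq_abs, abs_of_nonneg (hq0 i y)]
    exact hqbd i y
  have hfint : ∀ i, Integrable (fun y => c y * (q i y : ℂ)) P := by
    intro i
    refine Integrable.mono' (integrable_const 1)
      (hcmeas.mul (Complex.measurable_ofReal.comp (hqmeas i))).aestronglyMeasurable ?_
    filter_upwards with y
    rw [norm_mul, hcabs y, one_mul, Complex.norm_real,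
      Real.norm_eq_abs, abs_of_nonneg (hq0 i y)]
    exact hqbd i y
  -- sums over the partition
  have hνsum : ∑ i, (ν (A i)).toReal = 1 := by
    have h1 : ν (⋃ i, A i) = ∑' i, ν (A i) := measure_iUnion hAdisj hAmeas
    rw [hAcov, measure_univ, tsum_fintype] at h1
    have := congrArg ENNReal.toReal h1
    rw [ENNReal.toReal_sum (fun i _ => measure_ne_top ν _)] at this
    simpa using this.symm
  have hQsum : ∀ y, ∑ i, q i y = 1 := by
    intro y
    have h1 : Q y (⋃ i, A i) = ∑' i, Q y (A i) := measure_iUnion hAdisj hAmeas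
    rw [hAcov, measure_univ, tsum_fintype] at h1
    have := congrArg ENNReal.toReal h1
    rw [ENNReal.toReal_sum (fun i _ => measure_ne_top _ _)] at this
    simpa [hq] using this.symm
  have hQintsum : ∑ i, ∫ y, q i y ∂P = 1 := by
    rw [← integral_finset_sum _ (fun i _ => hqint i)]
    simp_rw [hQsum]
    simp
  have hae : ∀ᵐ y ∂P, y ∈ S' := by
    rw [ae_iff]
    have : P S'ᶜ = 0 := by
      rw [measure_compl hS'meas (measure_ne_top _ _), hS', measure_univ, tsub_self]
    simpa [Set.compl_def] using this
  -- per-index bound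
  have key : ∀ i, ‖∫ y, c y * (q i y : ℂ) ∂P‖ ≤
      a * (ν (A i)).toReal * ‖φ‖ + (∫ y, q i y ∂P - a * (ν (A i)).toReal) := by
    intro i
    set νi : ℝ := (ν (A i)).toReal with hνi
    have hrint : Integrable (fun y => c y * ((q i y - a * νi : ℝ) : ℂ)) P := by
      have : (fun y => c y * ((q i y - a * νi : ℝ) : ℂ))
          = fun y => c y * (q i y : ℂ) - ((a * νi : ℝ) : ℂ) * c y := by
        funext y; push_cast; ring
      rw [this]
      exact (hfint i).sub (hcint.const_mul _)
    have hsplit : ∫ y, c y * (q i y : ℂ) ∂P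
        = ((a * νi : ℝ) : ℂ) * φ + ∫ y, c y * ((q i y - a * νi : ℝ) : ℂ) ∂P := by
      rw [hφdef, ← integral_const_mul, ← integral_add (hcint.const_mul _) hrint]
      congr 1; funext y; push_cast; ring
    rw [hsplit]
    calc ‖((a * νi : ℝ) : ℂ) * φ + ∫ y, c y * ((q i y - a * νi : ℝ) : ℂ) ∂P‖
        ≤ ‖((a * νi : ℝ) : ℂ) * φ‖
          + ‖∫ y, c y * ((q i y - a * νi : ℝ) : ℂ) ∂P‖ := by
          exact norm_add_le _ _
      _ ≤ a * νi * ‖φ‖ + (∫ y, q i y ∂P - a * νi) := by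
          gcongr
          · rw [norm_mul, Complex.norm_real, Real.norm_eq_abs, abs_of_nonneg
              (mul_nonneg ha.le ENNReal.toReal_nonneg)]
          · calc ‖∫ y, c y * ((q i y - a * νi : ℝ) : ℂ) ∂P‖
                ≤ ∫ y, ‖c y * ((q i y - a * νi : ℝ) : ℂ)‖ ∂P :=
                  norm_integral_le_integral_norm _
              _ = ∫ y, (q i y - a * νi) ∂P := by
                  refine integral_congr_ae ?_
                  filter_upwards [hae] with y hy
                  rw [norm_mul, hcabs y, one_mul, Complex.norm_real,
                    Real.norm_eq_abs, abs_of_nonneg]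
                  exact sub_nonneg.mpr ((hdom y hy (A i) (hAmeas i)).1)
              _ = ∫ y, q i y ∂P - a * νi := by
                  rw [integral_sub (hqint i) (integrable_const _), integral_const]
                  simp
  -- sum the per-index bounds
  have hsum : ∑ i, ‖∫ y, c y * (q i y : ℂ) ∂P‖
      ≤ a * ‖φ‖ + (1 - a) := by
    calc ∑ i, ‖∫ y, c y * (q i y : ℂ) ∂P‖
        ≤ ∑ i, (a * (ν (A i)).toReal * ‖φ‖
            + (∫ y, q i y ∂P - a * (ν (A i)).toReal)) :=
          Finset.sum_le_sum fun i _ => key i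
      _ = a * ‖φ‖ + (1 - a) := by
          rw [Finset.sum_add_distrib, Finset.sum_sub_distrib, ← Finset.sum_mul,
            ← Finset.mul_sum, hνsum, hQintsum]
          ring
  refine le_trans hsum ?_
  -- final algebra
  have hb0 : (0:ℝ) < b := lt_of_lt_of_le one_pos hb1
  have h2b : (0:ℝ) < 2 * b := by linarith
  rw [div_mul_eq_mul_div]
  have ht := hφ1
  have ht0 := hφ0
  have ha4 : a ^ 4 ≤ a := pow_le_of_le_one ha.le ha1 (by norm_num)
  have hkey : a ^ 4 * (1 - ‖φ‖ ^ 2) / (2 * b) ≤ a * (1 - ‖φ‖) := by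
    rw [div_le_iff₀ h2b]
    nlinarith [mul_le_mul_of_nonneg_right ha4
        (mul_nonneg (sub_nonneg.mpr ht) (by linarith : (0:ℝ) ≤ 1 + ‖φ‖)),
      mul_le_mul_of_nonneg_left hb1 (mul_nonneg ha.le (sub_nonneg.mpr ht)),
      mul_nonneg ha.le (sub_nonneg.mpr ht)]
  linarith [hkey]
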